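/- Let q, M ≥ 1, η > 0, and let α : ℤ/qℤ × {1,…,M} → [0,1]. For (x,y) ∈ ℤ/qℤ × {−M,…,M}, define α̃(x,y) as the maximum of α(a,i) + α(a',i') over all pairs (a,i), (a',i') with α(a,i) > η, α(a',i') > η, a − a' = x, and i − i' ∈ {y, y−1} (α̃(x,y) = 0 if no such pair exists). Then Σ_{x,y} α̃(x,y) ≥ 4 · Σ_{a,i} α(a,i) − 4ηqM. -/

import Mathlib

section Auxiliary
open Finset
variable {q M : ℕ} [NeZero q]

private lemma fib_mem {A : Finset (ZMod q × ℤ)} {a : ZMod q} {b : ℤ}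
    (h : b ∈ (A.filter (fun p => p.1 = a)).image Prod.snd) : (a, b) ∈ A := by
  simp only [mem_image, mem_filter] at h
  obtain ⟨p, ⟨hp, hp1⟩, hp2⟩ := h
  have : p = (a, b) := Prod.ext hp1 hp2
  rwa [this] at hp

lemma setBM (A : Finset (ZMod q × ℤ))
    (hA : ∀ p ∈ A, p.2 ∈ Finset.Icc (1:ℤ) (M:ℤ)) (hne : A.Nonempty)
    (D : Finset (ZMod q × ℤ))
    (hD : ∀ p ∈ A, ∀ p' ∈ A, ∀ y : ℤ,
      (p.2 - p'.2 = y ∨ p.2 - p'.2 = y - 1) → -(M:ℤ) ≤ y → y ≤ (M:ℤ) →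
      (p.1 - p'.1, y) ∈ D) :
    2 * A.card ≤ D.card := by
  classical
  set π := A.image Prod.fst with hπ
  have hπne : π.Nonempty := hne.image _
  obtain ⟨astar, hastar, hmax⟩ := π.exists_max_image
      (fun a => (A.filter (fun p => p.1 = a)).card) hπne
  set fib : ZMod q → Finset ℤ := fun a => (A.filter (fun p => p.1 = a)).image Prod.snd with hfib
  have hfibcard : ∀ a, (fib a).card = (A.filter (fun p => p.1 = a)).card := by
    intro a
    apply Finset.card_image_of_injOn
    intro p hp p' hp' h
    simp only [mem_coe, mem_filter] at hp hp'
    exact Prod.ext (hp.2.trans hp'.2.symm) h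
  have hfibne : ∀ a ∈ π, (fib a).Nonempty := by
    intro a ha
    simp only [hπ, mem_image] at ha
    obtain ⟨p, hp, hpa⟩ := ha
    exact ⟨p.2, mem_image_of_mem _ (mem_filter.2 ⟨hp, hpa⟩)⟩
  have hex : ∀ a : ZMod q, ∃ m : ℤ, a ∈ π → (m ∈ fib a ∧ ∀ b ∈ fib a, b ≤ m) := by
    intro a
    by_cases h : a ∈ π
    · obtain ⟨m, hm, hm2⟩ := (fib a).exists_max_image id (hfibne a h)
      exact ⟨m, fun _ => ⟨hm, hm2⟩⟩
    · exact ⟨0, fun h' => absurd h' h⟩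
  choose mx hmx using hex
  have hmst := hmx astar hastar
  set Φ₁ : ZMod q × ℤ → ZMod q × ℤ := fun z => (astar - z.1, z.2 - mx z.1) with hΦ₁
  set Φ₂ : ZMod q × ℤ → ZMod q × ℤ := fun z => (astar - z.1, mx astar - z.2 + 1) with hΦ₂
  set D₁ := (π ×ˢ fib astar).image Φ₁ with hD₁
  set D₂ := A.image Φ₂ with hD₂
  have hmemπ : ∀ z ∈ A, z.1 ∈ π := fun z hz => mem_image_of_mem _ hz
  have hmemfib : ∀ z ∈ A, z.2 ∈ fib z.1 := fun z hz =>
    mem_image_of_mem _ (mem_filter.2 ⟨hz, rfl⟩)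
  have hcard₁ : D₁.card = π.card * (fib astar).card := by
    rw [hD₁, ← Finset.card_product]
    apply Finset.card_image_of_injOn
    intro z hz w hw h
    have h1 : astar - z.1 = astar - w.1 := congrArg Prod.fst h
    have h2 : z.2 - mx z.1 = w.2 - mx w.1 := congrArg Prod.snd h
    have hz1 : z.1 = w.1 := by rwa [sub_right_inj] at h1
    rw [hz1] at h2
    exact Prod.ext hz1 (by omega)
  have hcard₂ : D₂.card = A.card := by
    rw [hD₂]
    apply Finset.card_image_of_injOn
    intro z _ w _ h
    have h1 : astar - z.1 = astar - w.1 := congrArg Prod.fst h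
    have h2 : mx astar - z.2 + 1 = mx astar - w.2 + 1 := congrArg Prod.snd h
    exact Prod.ext (by rwa [sub_right_inj] at h1) (by omega)
  have hdisj : Disjoint D₁ D₂ := by
    rw [Finset.disjoint_left]
    rintro t ht₁ ht₂
    rw [hD₁, mem_image] at ht₁
    rw [hD₂, mem_image] at ht₂
    obtain ⟨z, hz, hzt⟩ := ht₁
    obtain ⟨w, hw, hwt⟩ := ht₂
    rw [mem_product] at hz
    have heq : Φ₁ z = Φ₂ w := hzt.trans hwt.symm
    have h1 : astar - z.1 = astar - w.1 := congrArg Prod.fst heq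
    have h2 : z.2 - mx z.1 = mx astar - w.2 + 1 := congrArg Prod.snd heq
    have hz1 : z.1 = w.1 := by rwa [sub_right_inj] at h1
    have hb1 : z.2 ≤ mx astar := hmst.2 _ hz.2
    have hb2 : w.2 ≤ mx w.1 := (hmx w.1 (hmemπ w hw)).2 _ (hmemfib w hw)
    rw [hz1] at h2
    omega
  have hsub : D₁ ∪ D₂ ⊆ D := by
    intro t ht
    rcases mem_union.1 ht with ht | ht
    · obtain ⟨z, hz, rfl⟩ := mem_image.1 ht
      rw [mem_product] at hz
      have hp : (astar, z.2) ∈ A := fib_mem hz.2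
      have hp' : (z.1, mx z.1) ∈ A := fib_mem (hmx z.1 hz.1).1
      have h1 := hA _ hp
      have h2 := hA _ hp'
      rw [mem_Icc] at h1 h2
      dsimp only at h1 h2
      have := hD _ hp _ hp' (z.2 - mx z.1) (Or.inl rfl) (by omega) (by omega)
      simpa using this
    · obtain ⟨w, hw, rfl⟩ := mem_image.1 ht
      have hp : (astar, mx astar) ∈ A := fib_mem hmst.1
      have h1 := hA _ hp
      have h2 := hA _ hw
      rw [mem_Icc] at h1 h2
      dsimp only at h1
      have := hD _ hp _ hw (mx astar - w.2 + 1) (Or.inr (by omega)) (by omega) (by omega)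
      simpa using this
  have hAcard : A.card = ∑ a ∈ π, (A.filter (fun p => p.1 = a)).card :=
    card_eq_sum_card_fiberwise (fun p hp => mem_image_of_mem _ hp)
  have h1 : A.card ≤ D₁.card := by
    rw [hcard₁, hfibcard, hAcard]
    calc ∑ a ∈ π, (A.filter (fun p => p.1 = a)).card
        ≤ ∑ _a ∈ π, (A.filter (fun p => p.1 = astar)).card :=
          sum_le_sum (fun a ha => hmax a ha)
      _ = π.card * (A.filter (fun p => p.1 = astar)).card := by
          rw [sum_const, smul_eq_mul]
  have h2 : A.card ≤ D₂.card := hcard₂.ge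
  calc 2 * A.card = A.card + A.card := by ring
    _ ≤ D₁.card + D₂.card := Nat.add_le_add h1 h2
    _ = (D₁ ∪ D₂).card := (card_union_of_disjoint hdisj).symm
    _ ≤ D.card := card_le_card hsub

lemma key :
    ∀ n : ℕ, ∀ A : Finset (ZMod q × ℤ), A.card = n →
    (∀ p ∈ A, p.2 ∈ Finset.Icc (1:ℤ) (M:ℤ)) →
    ∀ γ : ZMod q × ℤ → ℝ, (∀ p ∈ A, 0 ≤ γ p) →
    ∀ N : ZMod q → ℤ → ℝ, (∀ x y, 0 ≤ N x y) →
    (∀ p ∈ A, ∀ p' ∈ A, ∀ y : ℤ,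
      (p.2 - p'.2 = y ∨ p.2 - p'.2 = y - 1) → γ p + γ p' ≤ N (p.1 - p'.1) y) →
    4 * ∑ p ∈ A, γ p ≤ ∑ x : ZMod q, ∑ y ∈ Finset.Icc (-(M:ℤ)) (M:ℤ), N x y := by
  intro n
  induction n using Nat.strong_induction_on with
  | _ n ih =>
    intro A hcard hA γ hγ N hN0 hpair
    rcases A.eq_empty_or_nonempty with rfl | hne
    · simp only [sum_empty, mul_zero]
      exact sum_nonneg fun x _ => sum_nonneg fun y _ => hN0 x y
    · classical
      obtain ⟨p₀, hp₀, hmin⟩ := A.exists_min_image γ hne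
      set u := γ p₀ with hu
      have hu0 : 0 ≤ u := hγ _ hp₀
      set D : Finset (ZMod q × ℤ) := (Finset.univ ×ˢ Finset.Icc (-(M:ℤ)) (M:ℤ)).filter
        (fun z => ∃ p ∈ A, ∃ p' ∈ A, p.1 - p'.1 = z.1 ∧
          (p.2 - p'.2 = z.2 ∨ p.2 - p'.2 = z.2 - 1)) with hD
      have hmemD : ∀ p ∈ A, ∀ p' ∈ A, ∀ y : ℤ, (p.2 - p'.2 = y ∨ p.2 - p'.2 = y - 1) →
          (p.1 - p'.1, y) ∈ D := by
        intro p hp p' hp' y hy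
        have h1 := hA p hp
        have h2 := hA p' hp'
        rw [mem_Icc] at h1 h2
        rw [hD, mem_filter, mem_product]
        exact ⟨⟨mem_univ _, mem_Icc.2 ⟨by omega, by omega⟩⟩, p, hp, p', hp', rfl, hy⟩
      have hDbig : 2 * A.card ≤ D.card :=
        setBM A hA hne D (fun p hp p' hp' y hy _ _ => hmemD p hp p' hp' y hy)
      set A' := A.filter (fun p => γ p ≠ u) with hA'
      have hA'ss : A' ⊆ A := filter_subset _ _
      have hA'card : A'.card < n := by
        rw [← hcard]
        apply card_lt_card
        rw [ssubset_iff_of_subset hA'ss]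
        exact ⟨p₀, hp₀, by simp [hA']; exact fun _ => hu.symm⟩
      set γ' : ZMod q × ℤ → ℝ := fun p => γ p - u with hγ'
      set N' : ZMod q → ℤ → ℝ := fun x y => N x y - (if (x, y) ∈ D then 2 * u else 0) with hN'
      have hN'0 : ∀ x y, 0 ≤ N' x y := by
        intro x y
        simp only [hN']
        split_ifs with h
        · rw [hD, mem_filter] at h
          obtain ⟨-, p, hp, p', hp', hx, hy⟩ := h
          have hb := hpair p hp p' hp' y hy
          rw [hx] at hb
          have h1 := hmin p hp
          have h2 := hmin p' hp'
          linarith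
        · linarith [hN0 x y]
      have hpair' : ∀ p ∈ A', ∀ p' ∈ A', ∀ y : ℤ, (p.2 - p'.2 = y ∨ p.2 - p'.2 = y - 1) →
          γ' p + γ' p' ≤ N' (p.1 - p'.1) y := by
        intro p hp p' hp' y hy
        have hpA := hA'ss hp
        have hp'A := hA'ss hp'
        have hd := hmemD p hpA p' hp'A y hy
        simp only [hN', hγ', if_pos hd]
        have := hpair p hpA p' hp'A y hy
        linarith
      have hγ'0 : ∀ p ∈ A', 0 ≤ γ' p := by
        intro p hp
        have := hmin p (hA'ss hp)
        simp only [hγ']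
        linarith
      have IH := ih A'.card hA'card A' rfl (fun p hp => hA p (hA'ss hp)) γ' hγ'0 N' hN'0 hpair'
      have hsplit : ∑ x : ZMod q, ∑ y ∈ Finset.Icc (-(M:ℤ)) (M:ℤ), N' x y
          = (∑ x : ZMod q, ∑ y ∈ Finset.Icc (-(M:ℤ)) (M:ℤ), N x y) - 2 * u * D.card := by
        have h1 : ∑ x : ZMod q, ∑ y ∈ Finset.Icc (-(M:ℤ)) (M:ℤ),
            (if (x, y) ∈ D then 2 * u else 0) = 2 * u * D.card := by
          rw [← Finset.sum_product']
          have : ∀ z : ZMod q × ℤ, (if (z.1, z.2) ∈ D then 2*u else 0) = (if z ∈ D then 2*u else 0) := by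
            intro z; rfl
          simp_rw [this]
          rw [Finset.sum_ite_mem]
          have hDsub : D ⊆ Finset.univ ×ˢ Finset.Icc (-(M:ℤ)) (M:ℤ) := by
            rw [hD]; exact filter_subset _ _
          rw [Finset.inter_eq_right.2 hDsub, sum_const, nsmul_eq_mul]
          ring
        simp only [hN', sum_sub_distrib]
        rw [h1]
      have hAeq : ∑ p ∈ A', γ' p = ∑ p ∈ A, γ' p := by
        apply sum_filter_of_ne
        intro p _ hne0 heq
        exact hne0 (by simp [hγ', heq])
      have hsum : ∑ p ∈ A, γ p = (∑ p ∈ A', γ' p) + u * A.card := by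
        rw [hAeq]
        simp only [hγ', sum_sub_distrib, sum_const, nsmul_eq_mul]
        ring
      have hkey : (4:ℝ) * (u * A.card) ≤ 2 * u * D.card := by
        have hc : (2:ℝ) * A.card ≤ D.card := by exact_mod_cast hDbig
        nlinarith
      rw [hsplit] at IH
      rw [hsum]
      linarith

end Auxiliary

open Finset in
/-- Robust Brunn–Minkowski-type inequality: thresholding at level `η`, one has
`Σ α̃ ≥ 4 Σ α − 4ηqM`. -/
theorem stmt_11 (q M : ℕ) [NeZero q] (hM : 1 ≤ M) (η : ℝ) (hη : 0 < η)
    (α : ZMod q → ℤ → ℝ) (hα : ∀ a i, α a i ∈ Set.Icc (0 : ℝ) 1) :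
    4 * ∑ a : ZMod q, ∑ i ∈ Finset.Icc (1 : ℤ) M, α a i - 4 * η * q * M ≤
      ∑ x : ZMod q, ∑ y ∈ Finset.Icc (-(M : ℤ)) M,
        sSup (insert (0 : ℝ) {v : ℝ | ∃ a a' : ZMod q, ∃ i i' : ℤ,
          i ∈ Finset.Icc (1 : ℤ) (M : ℤ) ∧ i' ∈ Finset.Icc (1 : ℤ) (M : ℤ) ∧
          η < α a i ∧ η < α a' i' ∧ a - a' = x ∧ (i - i' = y ∨ i - i' = y - 1) ∧
          v = α a i + α a' i'}) := by
  classical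
  set N : ZMod q → ℤ → ℝ := fun x y =>
    sSup (insert (0 : ℝ) {v : ℝ | ∃ a a' : ZMod q, ∃ i i' : ℤ,
      i ∈ Finset.Icc (1 : ℤ) (M : ℤ) ∧ i' ∈ Finset.Icc (1 : ℤ) (M : ℤ) ∧
      η < α a i ∧ η < α a' i' ∧ a - a' = x ∧ (i - i' = y ∨ i - i' = y - 1) ∧
      v = α a i + α a' i'}) with hN
  have hbdd : ∀ x y, ∀ v ∈ insert (0 : ℝ) {v : ℝ | ∃ a a' : ZMod q, ∃ i i' : ℤ,
      i ∈ Finset.Icc (1 : ℤ) (M : ℤ) ∧ i' ∈ Finset.Icc (1 : ℤ) (M : ℤ) ∧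
      η < α a i ∧ η < α a' i' ∧ a - a' = x ∧ (i - i' = y ∨ i - i' = y - 1) ∧
      v = α a i + α a' i'}, v ≤ 2 := by
    rintro x y v (rfl | hv)
    · norm_num
    · obtain ⟨a, a', i, i', -, -, -, -, -, -, rfl⟩ := hv
      have h1 := (hα a i).2
      have h2 := (hα a' i').2
      linarith
  have hN0 : ∀ x y, 0 ≤ N x y := fun x y =>
    le_csSup ⟨2, hbdd x y⟩ (Set.mem_insert _ _)
  set A : Finset (ZMod q × ℤ) :=
    (Finset.univ ×ˢ Finset.Icc (1:ℤ) (M:ℤ)).filter (fun p => η < α p.1 p.2) with hA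
  set γ : ZMod q × ℤ → ℝ := fun p => α p.1 p.2 with hγ
  have hAmem : ∀ p ∈ A, p.2 ∈ Finset.Icc (1:ℤ) (M:ℤ) := by
    intro p hp
    rw [hA, mem_filter, mem_product] at hp
    exact hp.1.2
  have hγ0 : ∀ p ∈ A, 0 ≤ γ p := fun p _ => (hα p.1 p.2).1
  have hpair : ∀ p ∈ A, ∀ p' ∈ A, ∀ y : ℤ,
      (p.2 - p'.2 = y ∨ p.2 - p'.2 = y - 1) → γ p + γ p' ≤ N (p.1 - p'.1) y := by
    intro p hp p' hp' y hy
    rw [hA, mem_filter, mem_product] at hp hp'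
    apply le_csSup ⟨2, hbdd _ _⟩
    apply Set.mem_insert_of_mem
    exact ⟨p.1, p'.1, p.2, p'.2, hp.1.2, hp'.1.2, hp.2, hp'.2, rfl, hy, rfl⟩
  have main := key (q := q) (M := M) A.card A rfl hAmem γ hγ0 N hN0 hpair
  refine le_trans ?_ main
  -- 4 * Σ_full α - 4 η q M ≤ 4 * Σ_A γ
  have hfull : ∑ a : ZMod q, ∑ i ∈ Finset.Icc (1:ℤ) (M:ℤ), α a i
      = ∑ p ∈ Finset.univ ×ˢ Finset.Icc (1:ℤ) (M:ℤ), γ p := by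
    rw [Finset.sum_product]
  have hsplit := Finset.sum_filter_add_sum_filter_not
    (Finset.univ ×ˢ Finset.Icc (1:ℤ) (M:ℤ)) (fun p => η < α p.1 p.2) γ
  have hcardgrid : ((Finset.univ : Finset (ZMod q)) ×ˢ Finset.Icc (1:ℤ) (M:ℤ)).card = q * M := by
    rw [Finset.card_product, card_univ, ZMod.card]
    congr 1
    rw [Int.card_Icc]
    omega
  have hrest : ∑ p ∈ (Finset.univ ×ˢ Finset.Icc (1:ℤ) (M:ℤ)).filter
      (fun p => ¬ η < α p.1 p.2), γ p ≤ η * q * M := by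
    have hle : ∀ p ∈ (Finset.univ ×ˢ Finset.Icc (1:ℤ) (M:ℤ)).filter
        (fun p => ¬ η < α p.1 p.2), γ p ≤ η := by
      intro p hp
      rw [mem_filter] at hp
      exact le_of_not_gt hp.2
    have h2 := Finset.sum_le_card_nsmul _ _ _ hle
    rw [nsmul_eq_mul] at h2
    refine h2.trans ?_
    have h3 : (((Finset.univ ×ˢ Finset.Icc (1:ℤ) (M:ℤ)).filter
        (fun p => ¬ η < α p.1 p.2)).card : ℝ) ≤ (q * M : ℕ) := by
      exact_mod_cast (card_le_card (filter_subset _ _)).trans hcardgrid.le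
    have := mul_le_mul_of_nonneg_right h3 hη.le
    refine this.trans (le_of_eq ?_)
    push_cast
    ring
  rw [hfull, ← hsplit]
  have : ∑ p ∈ A, γ p = ∑ p ∈ (Finset.univ ×ˢ Finset.Icc (1:ℤ) (M:ℤ)).filter
      (fun p => η < α p.1 p.2), γ p := by rw [hA]
  rw [this]
  linarith
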